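/- Fix q ∈ ℤ and let X_q = {f ∈ C([0,1],ℝ) : f(0) = 0, f(1) = q} with the supremum metric. Define ℰ(f) = supₙ ℰₙ(f) ∈ [0,∞] and 𝒥ₙ(f) = 2ⁿ (4π²)⁻¹ Σ_{i=0}^{2ⁿ−1} (1 − cos(2π(f((i+1)2^{−n}) − f(i2^{−n}))))). Then: (i) for every sequence fₙ ∈ X_q converging uniformly to f ∈ X_q, ℰ(f) ≤ liminfₙ 𝒥ₙ(fₙ); (ii) for every f ∈ X_q there exists fₙ → f uniformly in X_q with limsupₙ 𝒥ₙ(fₙ) ≤ ℰ(f); (iii) if each fₙ minimizes 𝒥ₙ over X_q and fₙ → f* uniformly, then f* minimizes ℰ over X_q and ℰ(f*) = limₙ 𝒥ₙ(fₙ). -/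

import Mathlib

open Filter
open scoped ENNReal

noncomputable section

/-- Discrete Dirichlet energy of `f : [0,1] → ℝ` on the uniform grid of mesh
`2⁻ⁿ` (each edge counted once). -/
def gridEf (n : ℕ) (f : ℝ → ℝ) : ℝ :=
  2 ^ n * ∑ i ∈ Finset.range (2 ^ n),
    (f ((i + 1 : ℕ) / 2 ^ n) - f ((i : ℕ) / 2 ^ n)) ^ 2 / 2

/-- `ℰ(f) = supₙ ℰₙ(f)`, with values in the extended reals. -/
def gridEtot (f : ℝ → ℝ) : ℝ≥0∞ :=
  ⨆ n : ℕ, ENNReal.ofReal (gridEf n f)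

/-- Discrete Kuramoto energy of `f : [0,1] → ℝ` on the uniform grid of mesh
`2⁻ⁿ` (each edge counted once). -/
def gridJf (n : ℕ) (f : ℝ → ℝ) : ℝ :=
  2 ^ n * (1 / (4 * Real.pi ^ 2)) *
    ∑ i ∈ Finset.range (2 ^ n),
      (1 - Real.cos (2 * Real.pi * (f ((i + 1 : ℕ) / 2 ^ n) - f ((i : ℕ) / 2 ^ n))))

/-- Membership in `X_q = {f ∈ C([0,1],ℝ) : f(0) = 0, f(1) = q}`. -/
def MemXq (q : ℤ) (f : ℝ → ℝ) : Prop :=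
  ContinuousOn f (Set.Icc 0 1) ∧ f 0 = 0 ∧ f 1 = (q : ℝ)

namespace S16

lemma sum_range_two_mul (k : ℕ) (g : ℕ → ℝ) :
    ∑ j ∈ Finset.range (2 * k), g j
      = ∑ i ∈ Finset.range k, (g (2 * i) + g (2 * i + 1)) := by
  induction k with
  | zero => simp
  | succ k ih =>
    have h : 2 * (k + 1) = (2 * k + 1) + 1 := by ring
    rw [h, Finset.sum_range_succ, Finset.sum_range_succ, ih, Finset.sum_range_succ]
    ring

lemma gridEf_nonneg (n : ℕ) (f : ℝ → ℝ) : 0 ≤ gridEf n f := by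
  unfold gridEf
  apply mul_nonneg (by positivity)
  exact Finset.sum_nonneg fun i _ => by positivity

lemma gridJf_le_gridEf (n : ℕ) (f : ℝ → ℝ) : gridJf n f ≤ gridEf n f := by
  unfold gridJf gridEf
  rw [mul_assoc]
  apply mul_le_mul_of_nonneg_left _ (by positivity : (0:ℝ) ≤ 2 ^ n)
  rw [Finset.mul_sum]
  apply Finset.sum_le_sum
  intro i _
  set d : ℝ := f ((i + 1 : ℕ) / 2 ^ n) - f ((i : ℕ) / 2 ^ n) with hd
  clear_value d
  have h := Real.one_sub_sq_div_two_le_cos (x := 2 * Real.pi * d)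
  have hπ := Real.pi_pos
  have h1 : 1 - Real.cos (2 * Real.pi * d) ≤ 2 * Real.pi ^ 2 * d ^ 2 := by
    have he : (2 * Real.pi * d) ^ 2 = 4 * Real.pi ^ 2 * d ^ 2 := by ring
    linarith [h, he]
  calc 1 / (4 * Real.pi ^ 2) * (1 - Real.cos (2 * Real.pi * d))
      ≤ 1 / (4 * Real.pi ^ 2) * (2 * Real.pi ^ 2 * d ^ 2) := by
        exact mul_le_mul_of_nonneg_left h1 (by positivity)
    _ = d ^ 2 / 2 := by field_simp; ring

lemma gridEf_le_succ (m : ℕ) (f : ℝ → ℝ) : gridEf m f ≤ gridEf (m + 1) f := by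
  unfold gridEf
  rw [Finset.mul_sum, Finset.mul_sum]
  have h2 : (2 : ℕ) ^ (m + 1) = 2 * 2 ^ m := by ring
  rw [h2, sum_range_two_mul]
  apply Finset.sum_le_sum
  intro i _
  have hne : ((2 : ℝ) ^ m) ≠ 0 := by positivity
  have e0 : ((2 * i : ℕ) : ℝ) / 2 ^ (m + 1) = ((i : ℕ) : ℝ) / 2 ^ m := by
    push_cast
    rw [pow_succ]
    field_simp
  have e2 : ((2 * i + 1 + 1 : ℕ) : ℝ) / 2 ^ (m + 1) = ((i + 1 : ℕ) : ℝ) / 2 ^ m := by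
    push_cast
    rw [pow_succ]
    field_simp
    ring
  rw [e0, e2]
  have hp : (0 : ℝ) < 2 ^ m := by positivity
  have h21 : (2 : ℝ) ^ (m + 1) = 2 ^ m * 2 := by ring
  set x := f (((i + 1 : ℕ) : ℝ) / 2 ^ m)
  set y := f (((2 * i + 1 : ℕ) : ℝ) / 2 ^ (m + 1))
  set z := f (((i : ℕ) : ℝ) / 2 ^ m)
  clear_value x y z
  nlinarith [h21, mul_nonneg hp.le (sq_nonneg (x - 2 * y + z))]

lemma gridEf_mono (f : ℝ → ℝ) : Monotone fun n => gridEf n f :=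
  monotone_nat_of_le_succ fun n => gridEf_le_succ n f

lemma grid_mem (n j : ℕ) (hj : j ≤ 2 ^ n) : ((j : ℝ) / 2 ^ n) ∈ Set.Icc (0 : ℝ) 1 := by
  constructor
  · positivity
  · rw [div_le_one (by positivity)]
    exact_mod_cast hj

lemma tendsto_gridEf (m : ℕ) (fn : ℕ → ℝ → ℝ) (f : ℝ → ℝ)
    (h : ∀ x ∈ Set.Icc (0 : ℝ) 1, Tendsto (fun n => fn n x) atTop (nhds (f x))) :
    Tendsto (fun n => gridEf m (fn n)) atTop (nhds (gridEf m f)) := by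
  unfold gridEf
  apply Tendsto.const_mul
  apply tendsto_finset_sum
  intro i hi
  have hi' := Finset.mem_range.mp hi
  exact (((h _ (grid_mem m (i + 1) hi')).sub (h _ (grid_mem m i hi'.le))).pow 2).div_const 2

lemma small_edges {fn : ℕ → ℝ → ℝ} {f : ℝ → ℝ} (hf : ContinuousOn f (Set.Icc 0 1))
    (hu : TendstoUniformlyOn fn f atTop (Set.Icc 0 1)) {δ : ℝ} (hδ : 0 < δ) :
    ∀ᶠ n in atTop, ∀ i < 2 ^ n,
      |fn n ((i + 1 : ℕ) / 2 ^ n) - fn n ((i : ℕ) / 2 ^ n)| ≤ δ := by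
  have huc := isCompact_Icc.uniformContinuousOn_of_continuous hf
  obtain ⟨η, hη, hηd⟩ := Metric.uniformContinuousOn_iff.mp huc (δ / 3) (by positivity)
  have h1 : ∀ᶠ n in atTop, ∀ x ∈ Set.Icc (0:ℝ) 1, dist (f x) (fn n x) < δ / 3 :=
    Metric.tendstoUniformlyOn_iff.mp hu (δ / 3) (by positivity)
  have h0 : Tendsto (fun n : ℕ => (1 : ℝ) / 2 ^ n) atTop (nhds 0) := by
    simpa [one_div, inv_pow] using
      tendsto_pow_atTop_nhds_zero_of_lt_one (by norm_num : (0:ℝ) ≤ 1/2) (by norm_num : (1:ℝ)/2 < 1) |>.congr (fun n => by rw [div_pow]; norm_num)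
  have h2 : ∀ᶠ n in atTop, (1 : ℝ) / 2 ^ n < η := h0.eventually (gt_mem_nhds hη)
  filter_upwards [h1, h2] with n hn1 hn2 i hi
  have hmem0 : ((i : ℝ) / 2 ^ n) ∈ Set.Icc (0:ℝ) 1 := grid_mem n i hi.le
  have hmem1 : (((i + 1 : ℕ) : ℝ) / 2 ^ n) ∈ Set.Icc (0:ℝ) 1 := grid_mem n (i + 1) hi
  have hdist : dist (((i + 1 : ℕ) : ℝ) / 2 ^ n) ((i : ℝ) / 2 ^ n) < η := by
    rw [Real.dist_eq]
    have : (((i + 1 : ℕ) : ℝ) / 2 ^ n) - ((i : ℝ) / 2 ^ n) = 1 / 2 ^ n := by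
      push_cast; field_simp; ring
    rw [this, abs_of_pos (by positivity)]
    exact hn2
  have hd := hηd _ hmem1 _ hmem0 hdist
  have ha := hn1 _ hmem1
  have hb := hn1 _ hmem0
  rw [Real.dist_eq] at hd ha hb
  set y := ((i + 1 : ℕ) : ℝ) / 2 ^ n
  set x := ((i : ℕ) : ℝ) / 2 ^ n
  have ha' : |fn n y - f y| < δ / 3 := by rw [abs_sub_comm]; exact ha
  have htri : |fn n y - fn n x| ≤ |fn n y - f y| + |f y - f x| + |f x - fn n x| := by
    calc |fn n y - fn n x| ≤ |fn n y - f x| + |f x - fn n x| := abs_sub_le _ _ _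
      _ ≤ (|fn n y - f y| + |f y - f x|) + |f x - fn n x| := by
          linarith [abs_sub_le (fn n y) (f y) (f x)]
      _ = |fn n y - f y| + |f y - f x| + |f x - fn n x| := by ring
  linarith

lemma one_sub_cos_ge {ε x : ℝ} (hε : 0 < ε) (hx : |x| ≤ min 1 (Real.sqrt (48 * ε / 5))) :
    (1 - ε) * (x ^ 2 / 2) ≤ 1 - Real.cos x := by
  have h1 : |x| ≤ 1 := le_trans hx (min_le_left _ _)
  have hb := Real.cos_bound h1
  have h48 : (0:ℝ) ≤ 48 * ε / 5 := by positivity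
  have h2 : x ^ 2 ≤ 48 * ε / 5 := by
    have hx2 := le_trans hx (min_le_right _ _)
    calc x ^ 2 = |x| ^ 2 := (sq_abs x).symm
      _ ≤ (Real.sqrt (48 * ε / 5)) ^ 2 := by
          exact pow_le_pow_left₀ (abs_nonneg x) hx2 2
      _ = 48 * ε / 5 := Real.sq_sqrt h48
  have hb' : x ^ 2 / 2 - |x| ^ 4 * (5 / 96) ≤ 1 - Real.cos x := by
    have := (abs_le.mp hb).2
    linarith
  have h4 : |x| ^ 4 = (x ^ 2) ^ 2 := by
    calc |x| ^ 4 = (|x| ^ 2) ^ 2 := by ring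
      _ = (x ^ 2) ^ 2 := by rw [sq_abs]
  rw [h4] at hb'
  nlinarith [sq_nonneg x, mul_le_mul_of_nonneg_left h2 (mul_nonneg (sq_nonneg x) (by norm_num : (0:ℝ) ≤ 5/96))]

lemma Jf_ge (n : ℕ) (g : ℝ → ℝ) {ε : ℝ} (hε : 0 < ε)
    (hsmall : ∀ i < 2 ^ n,
      |2 * Real.pi * (g ((i + 1 : ℕ) / 2 ^ n) - g ((i : ℕ) / 2 ^ n))| ≤ min 1 (Real.sqrt (48 * ε / 5))) :
    (1 - ε) * gridEf n g ≤ gridJf n g := by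
  have hπ := Real.pi_pos
  have hsum : (4 * Real.pi ^ 2) * ((1 - ε) * ∑ i ∈ Finset.range (2 ^ n),
      (g ((i + 1 : ℕ) / 2 ^ n) - g ((i : ℕ) / 2 ^ n)) ^ 2 / 2)
      ≤ ∑ i ∈ Finset.range (2 ^ n),
      (1 - Real.cos (2 * Real.pi * (g ((i + 1 : ℕ) / 2 ^ n) - g ((i : ℕ) / 2 ^ n)))) := by
    rw [Finset.mul_sum, Finset.mul_sum]
    apply Finset.sum_le_sum
    intro i hi
    have h := one_sub_cos_ge hε (hsmall i (Finset.mem_range.mp hi))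
    set d : ℝ := g ((i + 1 : ℕ) / 2 ^ n) - g ((i : ℕ) / 2 ^ n) with hd
    clear_value d
    have heq : (1 - ε) * ((2 * Real.pi * d) ^ 2 / 2) = 4 * Real.pi ^ 2 * ((1 - ε) * (d ^ 2 / 2)) := by ring
    linarith [h, heq]
  unfold gridEf gridJf
  have hp2 : ((4 : ℝ) * Real.pi ^ 2) ≠ 0 := by positivity
  calc (1 - ε) * (2 ^ n * ∑ i ∈ Finset.range (2 ^ n),
        (g ((i + 1 : ℕ) / 2 ^ n) - g ((i : ℕ) / 2 ^ n)) ^ 2 / 2)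
      = (2 ^ n / (4 * Real.pi ^ 2)) * ((4 * Real.pi ^ 2) * ((1 - ε) * ∑ i ∈ Finset.range (2 ^ n),
        (g ((i + 1 : ℕ) / 2 ^ n) - g ((i : ℕ) / 2 ^ n)) ^ 2 / 2)) := by
        field_simp
    _ ≤ (2 ^ n / (4 * Real.pi ^ 2)) * ∑ i ∈ Finset.range (2 ^ n),
        (1 - Real.cos (2 * Real.pi * (g ((i + 1 : ℕ) / 2 ^ n) - g ((i : ℕ) / 2 ^ n)))) := by
        exact mul_le_mul_of_nonneg_left hsum (by positivity)
    _ = 2 ^ n * (1 / (4 * Real.pi ^ 2)) * ∑ i ∈ Finset.range (2 ^ n),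
        (1 - Real.cos (2 * Real.pi * (g ((i + 1 : ℕ) / 2 ^ n) - g ((i : ℕ) / 2 ^ n)))) := by ring

lemma part_i (q : ℤ) (fn : ℕ → ℝ → ℝ) (f : ℝ → ℝ)
    (hfn : ∀ n, MemXq q (fn n)) (hf : MemXq q f)
    (hu : TendstoUniformlyOn fn f atTop (Set.Icc 0 1)) :
    gridEtot f ≤ liminf (fun n => ENNReal.ofReal (gridJf n (fn n))) atTop := by
  set L := liminf (fun n => ENNReal.ofReal (gridJf n (fn n))) atTop with hL
  have hpt : ∀ x ∈ Set.Icc (0:ℝ) 1, Tendsto (fun n => fn n x) atTop (nhds (f x)) :=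
    fun x hx => hu.tendsto_at hx
  have key : ∀ m : ℕ, ∀ ε : ℝ, 0 < ε → ε ≤ 1 →
      ENNReal.ofReal ((1 - ε) * gridEf m f) ≤ L := by
    intro m ε hε hε1
    set δ := min 1 (Real.sqrt (48 * ε / 5)) with hδdef
    have hδ : 0 < δ := lt_min one_pos (Real.sqrt_pos.mpr (by positivity))
    have hπ := Real.pi_pos
    have hsm := small_edges hf.1 hu (show 0 < δ / (2 * Real.pi) by positivity)
    have hev : ∀ᶠ n in atTop, (1 - ε) * gridEf m (fn n) ≤ gridJf n (fn n) := by
      filter_upwards [hsm, eventually_ge_atTop m] with n hn hmn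
      have h1 : (1 - ε) * gridEf n (fn n) ≤ gridJf n (fn n) := by
        apply Jf_ge n (fn n) hε
        intro i hi
        have hni := hn i hi
        have habs : |2 * Real.pi * (fn n ((i + 1 : ℕ) / 2 ^ n) - fn n ((i : ℕ) / 2 ^ n))|
            = 2 * Real.pi * |fn n ((i + 1 : ℕ) / 2 ^ n) - fn n ((i : ℕ) / 2 ^ n)| := by
          rw [abs_mul, abs_of_pos (by positivity : (0:ℝ) < 2 * Real.pi)]
        rw [habs]
        have hmul := mul_le_mul_of_nonneg_left hni (by positivity : (0:ℝ) ≤ 2 * Real.pi)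
        have he : 2 * Real.pi * (δ / (2 * Real.pi)) = δ := by field_simp
        linarith [hmul, he]
      have h2 : gridEf m (fn n) ≤ gridEf n (fn n) := gridEf_mono (fn n) hmn
      nlinarith [mul_le_mul_of_nonneg_left h2 (by linarith : (0:ℝ) ≤ 1 - ε)]
    have hlim : Tendsto (fun n => ENNReal.ofReal ((1 - ε) * gridEf m (fn n))) atTop
        (nhds (ENNReal.ofReal ((1 - ε) * gridEf m f))) :=
      (ENNReal.continuous_ofReal.tendsto _).comp
        (Tendsto.const_mul _ (tendsto_gridEf m fn f hpt))
    calc ENNReal.ofReal ((1 - ε) * gridEf m f)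
        = liminf (fun n => ENNReal.ofReal ((1 - ε) * gridEf m (fn n))) atTop :=
          hlim.liminf_eq.symm
      _ ≤ L := liminf_le_liminf (hev.mono fun n h => ENNReal.ofReal_le_ofReal h)
  rw [gridEtot]
  apply iSup_le
  intro m
  have hseq : Tendsto (fun k : ℕ => ENNReal.ofReal ((1 - 1 / ((k : ℝ) + 1)) * gridEf m f)) atTop
      (nhds (ENNReal.ofReal (gridEf m f))) := by
    have h1 : Tendsto (fun k : ℕ => (1 - 1 / ((k : ℝ) + 1)) * gridEf m f) atTop
        (nhds ((1 - 0) * gridEf m f)) :=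
      (tendsto_const_nhds.sub tendsto_one_div_add_atTop_nhds_zero_nat).mul_const _
    simpa [Function.comp_def] using (ENNReal.continuous_ofReal.tendsto _).comp h1
  apply le_of_tendsto hseq
  apply Eventually.of_forall
  intro k
  refine key m (1 / ((k : ℝ) + 1)) (by positivity) ?_
  rw [div_le_one (by positivity)]
  linarith [Nat.cast_nonneg (α := ℝ) k]

lemma etot_mem (f : ℝ → ℝ) (n : ℕ) : ENNReal.ofReal (gridJf n f) ≤ gridEtot f := by
  rw [gridEtot]
  exact le_trans (ENNReal.ofReal_le_ofReal (gridJf_le_gridEf n f))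
    (le_iSup (fun n => ENNReal.ofReal (gridEf n f)) n)

lemma part_ii (q : ℤ) (f : ℝ → ℝ) (hf : MemXq q f) :
    ∃ fn : ℕ → ℝ → ℝ, (∀ n, MemXq q (fn n)) ∧
      TendstoUniformlyOn fn f atTop (Set.Icc 0 1) ∧
      limsup (fun n => ENNReal.ofReal (gridJf n (fn n))) atTop ≤ gridEtot f := by
  refine ⟨fun _ => f, fun _ => hf, ?_, ?_⟩
  · intro u hu
    exact Eventually.of_forall fun n x _ => refl_mem_uniformity hu
  · exact limsup_le_of_le (h := Eventually.of_forall fun n => etot_mem f n)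

end S16

/-- Theorem 4.1: `Γ`-convergence on the fundamental domain of
the circle. (i) liminf inequality, (ii) recovery sequences, (iii) convergence
of minimizers. -/
theorem statement16 (q : ℤ) :
    (∀ (fn : ℕ → ℝ → ℝ) (f : ℝ → ℝ),
      (∀ n, MemXq q (fn n)) → MemXq q f →
      TendstoUniformlyOn fn f atTop (Set.Icc 0 1) →
      gridEtot f ≤ liminf (fun n => ENNReal.ofReal (gridJf n (fn n))) atTop) ∧
    (∀ f : ℝ → ℝ, MemXq q f →
      ∃ fn : ℕ → ℝ → ℝ, (∀ n, MemXq q (fn n)) ∧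
        TendstoUniformlyOn fn f atTop (Set.Icc 0 1) ∧
        limsup (fun n => ENNReal.ofReal (gridJf n (fn n))) atTop ≤ gridEtot f) ∧
    (∀ (fn : ℕ → ℝ → ℝ) (fstar : ℝ → ℝ),
      (∀ n, MemXq q (fn n)) →
      (∀ n, ∀ h : ℝ → ℝ, MemXq q h → gridJf n (fn n) ≤ gridJf n h) →
      MemXq q fstar →
      TendstoUniformlyOn fn fstar atTop (Set.Icc 0 1) →
      (∀ h : ℝ → ℝ, MemXq q h → gridEtot fstar ≤ gridEtot h) ∧
      Tendsto (fun n => ENNReal.ofReal (gridJf n (fn n))) atTop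
        (nhds (gridEtot fstar))) := by
  refine ⟨S16.part_i q, S16.part_ii q, ?_⟩
  intro fn fstar hfn hmin hfs hu
  have hlb := S16.part_i q fn fstar hfn hfs hu
  have hub : ∀ h : ℝ → ℝ, MemXq q h →
      limsup (fun n => ENNReal.ofReal (gridJf n (fn n))) atTop ≤ gridEtot h := by
    intro h hh
    refine limsup_le_of_le (h := Eventually.of_forall fun n => ?_)
    exact le_trans (ENNReal.ofReal_le_ofReal (hmin n h hh)) (S16.etot_mem h n)
  exact ⟨fun h hh => le_trans hlb (le_trans liminf_le_limsup (hub h hh)),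
    tendsto_of_le_liminf_of_limsup_le hlb (hub fstar hfs)⟩


end
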